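/- Fix n ≥ 1, ν > 0 and σ ∈ (1/2,1]. There exist constants C > 0 and c > 0 such that for every t ≥ 0 and every ξ ∈ ℝⁿ with 0 < |ξ| ≤ ρ: |𝒦₁(t,ξ) − e^{−(ν/2)t|ξ|^{2σ}} cos(t|ξ|)| ≤ C e^{−c(1+t)|ξ|^{2σ}} t |ξ|^{4σ−1}. -/
import Mathlib


/-- Low-frequency approximation of the multiplier `𝒦₁` by the hybrid kernel
`e^{-(ν/2)t|ξ|^{2σ}} cos(t|ξ|)` for `σ ∈ (1/2,1]`. -/
theorem stmt8 (n : ℕ) (hn : 1 ≤ n) (ν σ : ℝ) (hν : 0 < ν)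
    (hσ : σ ∈ Set.Ioc (1/2 : ℝ) 1) (ρ : ℝ)
    (hρ : ρ = (1/2) * (2/ν) ^ ((1:ℝ)/(2*σ - 1)))
    (φ : EuclideanSpace ℝ (Fin n) → ℝ)
    (hφ : ∀ ξ, φ ξ = Real.sqrt (1 - ν^2/4 * ‖ξ‖ ^ (4*σ - 2))) :
    ∃ C > 0, ∃ c > 0, ∀ t : ℝ, 0 ≤ t →
      ∀ ξ : EuclideanSpace ℝ (Fin n), 0 < ‖ξ‖ → ‖ξ‖ ≤ ρ →
        |Real.exp (-(ν/2) * t * ‖ξ‖ ^ (2*σ)) * Real.cos (t * ‖ξ‖ * φ ξ) -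
            Real.exp (-(ν/2) * t * ‖ξ‖ ^ (2*σ)) * Real.cos (t * ‖ξ‖)|
          ≤ C * Real.exp (-c * (1 + t) * ‖ξ‖ ^ (2*σ)) * t * ‖ξ‖ ^ (4*σ - 1) := by
  obtain ⟨hσ1, hσ2⟩ := hσ
  have hρ0 : 0 < ρ := by
    rw [hρ]; positivity
  refine ⟨ν^2/4 * Real.exp ((ν/4) * ρ ^ (2*σ)), by positivity, ν/4, by positivity, ?_⟩
  intro t ht ξ hr0 hξρ
  set r := ‖ξ‖ with hr
  set x := ν^2/4 * r ^ (4*σ - 2) with hxdef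
  have hx0 : 0 ≤ x := by positivity
  have hφ1 : φ ξ ≤ 1 := by
    rw [hφ]
    calc Real.sqrt (1 - x) ≤ Real.sqrt 1 := Real.sqrt_le_sqrt (by linarith)
      _ = 1 := Real.sqrt_one
  have hφ0 : 0 ≤ φ ξ := by rw [hφ]; exact Real.sqrt_nonneg _
  have h1φ : 1 - φ ξ ≤ x := by
    rcases le_or_gt x 1 with h | h
    · have hy0 : 0 ≤ 1 - x := by linarith
      have h2 : Real.sqrt ((1 - x)^2) ≤ Real.sqrt (1 - x) :=
        Real.sqrt_le_sqrt (by nlinarith)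
      rw [Real.sqrt_sq hy0] at h2
      rw [hφ]; linarith
    · linarith
  -- cosine Lipschitz bound
  have hcos : |Real.cos (t * r * φ ξ) - Real.cos (t * r)| ≤ t * r * (1 - φ ξ) := by
    have hl : |Real.cos (t * r * φ ξ) - Real.cos (t * r)| ≤ |t * r * φ ξ - t * r| := by
      rw [Real.cos_sub_cos]
      calc |(-2) * Real.sin ((t * r * φ ξ + t * r) / 2) * Real.sin ((t * r * φ ξ - t * r) / 2)|
          = 2 * |Real.sin ((t * r * φ ξ + t * r) / 2)| *
              |Real.sin ((t * r * φ ξ - t * r) / 2)| := by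
            rw [abs_mul, abs_mul]; norm_num
        _ ≤ 2 * 1 * |(t * r * φ ξ - t * r) / 2| :=
            mul_le_mul (mul_le_mul_of_nonneg_left (Real.abs_sin_le_one _) (by norm_num))
              Real.abs_sin_le_abs (abs_nonneg _) (by norm_num)
        _ = |t * r * φ ξ - t * r| := by rw [abs_div, abs_two]; ring
    calc |Real.cos (t * r * φ ξ) - Real.cos (t * r)| ≤ |t * r * φ ξ - t * r| := hl
      _ = |t * r * (φ ξ - 1)| := by ring_nf
      _ = t * r * (1 - φ ξ) := by
          rw [abs_mul, abs_of_nonneg (by positivity : (0:ℝ) ≤ t * r),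
            abs_of_nonpos (by linarith : φ ξ - 1 ≤ 0)]
          ring
  have hE : (0:ℝ) < Real.exp (-(ν/2) * t * r ^ (2*σ)) := Real.exp_pos _
  have hrpow : r ^ (4*σ-2) * r = r ^ (4*σ-1) := by
    nth_rewrite 2 [← Real.rpow_one r]
    rw [← Real.rpow_add hr0]
    congr 1; ring
  have hrρ : r ^ (2*σ) ≤ ρ ^ (2*σ) :=
    Real.rpow_le_rpow hr0.le hξρ (by linarith)
  have hexp : Real.exp (-(ν/2) * t * r ^ (2*σ)) ≤
      Real.exp ((ν/4) * ρ ^ (2*σ)) * Real.exp (-(ν/4) * (1 + t) * r ^ (2*σ)) := by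
    rw [← Real.exp_add]
    apply Real.exp_le_exp.mpr
    have h1 : 0 ≤ t * r ^ (2*σ) := by positivity
    nlinarith
  calc |Real.exp (-(ν/2) * t * r ^ (2*σ)) * Real.cos (t * r * φ ξ) -
        Real.exp (-(ν/2) * t * r ^ (2*σ)) * Real.cos (t * r)|
      = Real.exp (-(ν/2) * t * r ^ (2*σ)) * |Real.cos (t * r * φ ξ) - Real.cos (t * r)| := by
        rw [← mul_sub, abs_mul, abs_of_pos hE]
    _ ≤ Real.exp (-(ν/2) * t * r ^ (2*σ)) * (t * r * x) := by
        apply mul_le_mul_of_nonneg_left _ hE.le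
        calc |Real.cos (t * r * φ ξ) - Real.cos (t * r)| ≤ t * r * (1 - φ ξ) := hcos
          _ ≤ t * r * x := by
              apply mul_le_mul_of_nonneg_left h1φ (by positivity)
    _ = ν^2/4 * Real.exp (-(ν/2) * t * r ^ (2*σ)) * t * r ^ (4*σ-1) := by
        rw [hxdef, ← hrpow]; ring
    _ ≤ ν^2/4 * (Real.exp ((ν/4) * ρ ^ (2*σ)) * Real.exp (-(ν/4) * (1 + t) * r ^ (2*σ)))
          * t * r ^ (4*σ-1) := by
        have hr1 : (0:ℝ) ≤ r ^ (4*σ-1) := by positivity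
        have hν2 : (0:ℝ) ≤ ν^2/4 := by positivity
        gcongr
    _ = ν^2/4 * Real.exp ((ν/4) * ρ ^ (2*σ)) *
          Real.exp (-(ν/4) * (1 + t) * r ^ (2*σ)) * t * r ^ (4*σ-1) := by ring
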